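/- For every permutation σ of [n], sgn(σ) = (−1)^{cval(σ)+cdrise(σ)+cdfall(σ)+ucross(σ)+lcross(σ)}, i.e. the sign of σ is determined by the parities of the excedance-type statistics and the crossings. -/

import Mathlib

open Finset

def fixCt {n : ℕ} (σ : Equiv.Perm (Fin n)) : ℕ :=
  (univ.filter fun i => σ i = i).card

def cpeakCt {n : ℕ} (σ : Equiv.Perm (Fin n)) : ℕ :=
  (univ.filter fun i => σ⁻¹ i < i ∧ σ i < i).card

def cvalCt {n : ℕ} (σ : Equiv.Perm (Fin n)) : ℕ :=
  (univ.filter fun i => i < σ⁻¹ i ∧ i < σ i).card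

def cdriseCt {n : ℕ} (σ : Equiv.Perm (Fin n)) : ℕ :=
  (univ.filter fun i => σ⁻¹ i < i ∧ i < σ i).card

def cdfallCt {n : ℕ} (σ : Equiv.Perm (Fin n)) : ℕ :=
  (univ.filter fun i => i < σ⁻¹ i ∧ σ i < i).card

def ucrossCt {n : ℕ} (σ : Equiv.Perm (Fin n)) : ℕ :=
  (univ.filter fun p : Fin n × Fin n × Fin n × Fin n =>
    p.1 < p.2.1 ∧ p.2.1 < p.2.2.1 ∧ p.2.2.1 < p.2.2.2 ∧
    p.2.2.1 = σ p.1 ∧ p.2.2.2 = σ p.2.1).card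

def lcrossCt {n : ℕ} (σ : Equiv.Perm (Fin n)) : ℕ :=
  (univ.filter fun p : Fin n × Fin n × Fin n × Fin n =>
    p.1 < p.2.1 ∧ p.2.1 < p.2.2.1 ∧ p.2.2.1 < p.2.2.2 ∧
    p.1 = σ p.2.2.1 ∧ p.2.1 = σ p.2.2.2).card

def unestCt {n : ℕ} (σ : Equiv.Perm (Fin n)) : ℕ :=
  (univ.filter fun p : Fin n × Fin n × Fin n × Fin n =>
    p.1 < p.2.1 ∧ p.2.1 < p.2.2.1 ∧ p.2.2.1 < p.2.2.2 ∧
    p.2.2.2 = σ p.1 ∧ p.2.2.1 = σ p.2.1).card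

def lnestCt {n : ℕ} (σ : Equiv.Perm (Fin n)) : ℕ :=
  (univ.filter fun p : Fin n × Fin n × Fin n × Fin n =>
    p.1 < p.2.1 ∧ p.2.1 < p.2.2.1 ∧ p.2.2.1 < p.2.2.2 ∧
    p.1 = σ p.2.2.2 ∧ p.2.1 = σ p.2.2.1).card

def psnestCt {n : ℕ} (σ : Equiv.Perm (Fin n)) : ℕ :=
  (univ.filter fun p : Fin n × Fin n × Fin n =>
    p.1 < p.2.1 ∧ p.2.1 < p.2.2 ∧ σ p.2.1 = p.2.1 ∧ σ p.1 = p.2.2).card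

def invCt {n : ℕ} (σ : Equiv.Perm (Fin n)) : ℕ :=
  (univ.filter fun p : Fin n × Fin n => p.1 < p.2 ∧ σ p.2 < σ p.1).card

/-- Number of cycles of a permutation, counting fixed points as cycles. -/
def cycCt {n : ℕ} (σ : Equiv.Perm (Fin n)) : ℕ :=
  σ.cycleType.card + fixCt σ

def ucrossAt {n : ℕ} (σ : Equiv.Perm (Fin n)) (j : Fin n) : ℕ :=
  (univ.filter fun p : Fin n × Fin n × Fin n =>
    p.1 < j ∧ j < p.2.1 ∧ p.2.1 < p.2.2 ∧ p.2.1 = σ p.1 ∧ p.2.2 = σ j).card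

def unestAt {n : ℕ} (σ : Equiv.Perm (Fin n)) (j : Fin n) : ℕ :=
  (univ.filter fun p : Fin n × Fin n × Fin n =>
    p.1 < j ∧ j < p.2.1 ∧ p.2.1 < p.2.2 ∧ p.2.1 = σ j ∧ p.2.2 = σ p.1).card

def lcrossAt {n : ℕ} (σ : Equiv.Perm (Fin n)) (k : Fin n) : ℕ :=
  (univ.filter fun p : Fin n × Fin n × Fin n =>
    p.1 < p.2.1 ∧ p.2.1 < k ∧ k < p.2.2 ∧ p.1 = σ k ∧ p.2.1 = σ p.2.2).card

def lnestAt {n : ℕ} (σ : Equiv.Perm (Fin n)) (k : Fin n) : ℕ :=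
  (univ.filter fun p : Fin n × Fin n × Fin n =>
    p.1 < p.2.1 ∧ p.2.1 < k ∧ k < p.2.2 ∧ p.1 = σ p.2.2 ∧ p.2.1 = σ k).card

/-- `i` is a record (left-to-right maximum) of `σ`. -/
def IsRecord {n : ℕ} (σ : Equiv.Perm (Fin n)) (i : Fin n) : Prop :=
  ∀ j, j < i → σ j < σ i

/-- `i` is an antirecord (right-to-left minimum) of `σ`. -/
def IsAntirecord {n : ℕ} (σ : Equiv.Perm (Fin n)) (i : Fin n) : Prop :=
  ∀ j, i < j → σ i < σ j

def ujoinCt {n : ℕ} (σ : Equiv.Perm (Fin n)) : ℕ :=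
  (univ.filter fun p : Fin n × Fin n × Fin n =>
    p.1 < p.2.1 ∧ p.2.1 < p.2.2 ∧ p.2.1 = σ p.1 ∧ p.2.2 = σ p.2.1).card

def ljoinCt {n : ℕ} (σ : Equiv.Perm (Fin n)) : ℕ :=
  (univ.filter fun p : Fin n × Fin n × Fin n =>
    p.1 < p.2.1 ∧ p.2.1 < p.2.2 ∧ p.1 = σ p.2.1 ∧ p.2.1 = σ p.2.2).card

theorem Equiv.Perm.apply_inv_self {α : Type*} (f : Equiv.Perm α) (x : α) : f (f⁻¹ x) = x :=
  f.apply_symm_apply x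

theorem Equiv.Perm.inv_apply_self {α : Type*} (f : Equiv.Perm α) (x : α) : f⁻¹ (f x) = x :=
  f.symm_apply_apply x

namespace SgnAux
variable {n : ℕ}

noncomputable def ind (p : Prop) [Decidable p] : ℤ := if p then 1 else 0

lemma ind_congr {p q : Prop} [Decidable p] [Decidable q] (h : p ↔ q) : ind p = ind q := by
  simp [ind, h]

lemma ind_and (p q : Prop) [Decidable p] [Decidable q] : ind (p ∧ q) = ind p * ind q := by
  simp [ind, ite_and]; split_ifs <;> simp

lemma cardZ {α : Type*} [Fintype α] (p : α → Prop) [DecidablePred p] :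
    ((univ.filter p).card : ℤ) = ∑ x, ind (p x) := by
  rw [Finset.card_filter]; push_cast [ind]; rfl

lemma sum_ind_eq (c : Fin n) (g : Fin n → ℤ) :
    ∑ k, ind (k = c) * g k = g c := by
  simp [ind, ite_mul]

lemma sum_eq_left (c : Fin n) (P : Fin n → Prop) [DecidablePred P] :
    ∑ k, ind (k = c ∧ P k) = ind (P c) := by
  simp only [ind_and]
  exact sum_ind_eq c _

lemma sum_sigma_eq (σ : Equiv.Perm (Fin n)) (a : Fin n) (P : Fin n → Prop) [DecidablePred P] :
    ∑ b, ind (σ b = a ∧ P b) = ind (P (σ⁻¹ a)) := by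
  rw [← Equiv.sum_comp σ⁻¹ (fun b => ind (σ b = a ∧ P b))]
  simp only [Equiv.Perm.apply_inv_self]
  exact sum_eq_left a fun b => P (σ⁻¹ b)

lemma sum4_comm (F : Fin n → Fin n → Fin n → Fin n → ℤ) :
    ∑ a, ∑ b, ∑ k, ∑ l, F a b k l = ∑ k, ∑ l, ∑ a, ∑ b, F a b k l := by
  calc ∑ a, ∑ b, ∑ k, ∑ l, F a b k l
      = ∑ a, ∑ k, ∑ b, ∑ l, F a b k l :=
        sum_congr rfl fun a _ => Finset.sum_comm
    _ = ∑ k, ∑ a, ∑ b, ∑ l, F a b k l := Finset.sum_comm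
    _ = ∑ k, ∑ a, ∑ l, ∑ b, F a b k l :=
        sum_congr rfl fun k _ => sum_congr rfl fun a _ => Finset.sum_comm
    _ = ∑ k, ∑ l, ∑ a, ∑ b, F a b k l :=
        sum_congr rfl fun k _ => Finset.sum_comm

lemma sign_eq_signAux (σ : Equiv.Perm (Fin n)) :
    Equiv.Perm.sign σ = Equiv.Perm.signAux σ := by
  refine Equiv.Perm.swap_induction_on σ (by simp [Equiv.Perm.signAux_one])
    (fun f x y hxy ih => ?_)
  rw [map_mul, Equiv.Perm.signAux_mul, Equiv.Perm.sign_swap hxy,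
    Equiv.Perm.signAux_swap hxy, ih]

lemma sign_eq_pow_invCt (σ : Equiv.Perm (Fin n)) :
    Equiv.Perm.sign σ = (-1 : ℤˣ) ^ invCt σ := by
  rw [sign_eq_signAux]
  unfold Equiv.Perm.signAux
  rw [← Finset.prod_filter_mul_prod_filter_not (Equiv.Perm.finPairsLT n)
    (fun x => σ x.1 ≤ σ x.2)]
  rw [Finset.prod_congr rfl (fun x hx => if_pos (mem_filter.mp hx).2), Finset.prod_const,
    Finset.prod_congr rfl (fun x hx => if_neg (mem_filter.mp hx).2),
    Finset.prod_const_one, mul_one]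
  congr 1
  apply Finset.card_bij' (fun x _ => ((x.2, x.1) : Fin n × Fin n))
    (fun p _ => (⟨p.2, p.1⟩ : Σ _ : Fin n, Fin n))
  · intro x hx
    rw [mem_filter] at hx ⊢
    obtain ⟨hmem, hle⟩ := hx
    rw [Equiv.Perm.mem_finPairsLT] at hmem
    refine ⟨mem_univ _, hmem, lt_of_le_of_ne hle ?_⟩
    exact fun h => (ne_of_lt hmem) (σ.injective h.symm) |>.elim
  · intro p hp
    rw [mem_filter] at hp ⊢
    rw [Equiv.Perm.mem_finPairsLT]
    exact ⟨hp.2.1, le_of_lt hp.2.2⟩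
  · intro x _; rfl
  · intro p _; rfl

variable (σ : Equiv.Perm (Fin n))

lemma invZ : (invCt σ : ℤ) = ∑ a : Fin n, ∑ b : Fin n, ind (a < b ∧ σ b < σ a) := by
  rw [invCt, cardZ, Fintype.sum_prod_type]

lemma cvalZ : (cvalCt σ : ℤ) = ∑ a : Fin n, ind (a < σ⁻¹ a ∧ a < σ a) := by
  rw [cvalCt, cardZ]

lemma cpeakZ : (cpeakCt σ : ℤ) = ∑ a : Fin n, ind (σ⁻¹ a < a ∧ σ a < a) := by
  rw [cpeakCt, cardZ]

lemma cvalPairZ : (cvalCt σ : ℤ) =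
    ∑ a : Fin n, ∑ b : Fin n, ind (a < b ∧ σ b = a ∧ a < σ a) := by
  rw [cvalZ]
  refine sum_congr rfl fun a _ => ?_
  rw [show (∑ b : Fin n, ind (a < b ∧ σ b = a ∧ a < σ a))
      = ∑ b : Fin n, ind (σ b = a ∧ (a < b ∧ a < σ a)) from
    sum_congr rfl fun b _ => ind_congr (by tauto)]
  rw [sum_sigma_eq]

lemma cdfallPairZ : (cdfallCt σ : ℤ) =
    ∑ a : Fin n, ∑ b : Fin n, ind (a < b ∧ σ b = a ∧ σ a < a) := by
  rw [cdfallCt, cardZ]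
  refine sum_congr rfl fun a _ => ?_
  rw [show (∑ b : Fin n, ind (a < b ∧ σ b = a ∧ σ a < a))
      = ∑ b : Fin n, ind (σ b = a ∧ (a < b ∧ σ a < a)) from
    sum_congr rfl fun b _ => ind_congr (by tauto)]
  rw [sum_sigma_eq]

lemma cdrisePairZ : (cdriseCt σ : ℤ) =
    ∑ a : Fin n, ∑ b : Fin n, ind (a < b ∧ σ a = b ∧ b < σ b) := by
  rw [cdriseCt, cardZ]
  rw [← Equiv.sum_comp σ (fun i => ind (σ⁻¹ i < i ∧ i < σ i))]
  simp only [Equiv.Perm.inv_apply_self]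
  refine sum_congr rfl fun a _ => ?_
  rw [show (∑ b : Fin n, ind (a < b ∧ σ a = b ∧ b < σ b))
      = ∑ b : Fin n, ind (b = σ a ∧ (a < b ∧ b < σ b)) from
    sum_congr rfl fun b _ => ind_congr (by tauto)]
  rw [sum_eq_left]

lemma ucrossZ : (ucrossCt σ : ℤ) =
    ∑ a : Fin n, ∑ b : Fin n, ind (a < b ∧ b < σ a ∧ σ a < σ b) := by
  rw [ucrossCt, cardZ, Fintype.sum_prod_type]
  refine sum_congr rfl fun a _ => ?_
  rw [Fintype.sum_prod_type]
  refine sum_congr rfl fun b _ => ?_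
  rw [Fintype.sum_prod_type]
  have step1 : ∀ k : Fin n,
      (∑ l : Fin n, ind (a < b ∧ b < k ∧ k < l ∧ k = σ a ∧ l = σ b))
        = ind (k = σ a ∧ (a < b ∧ b < k ∧ k < σ b)) := by
    intro k
    rw [show (∑ l : Fin n, ind (a < b ∧ b < k ∧ k < l ∧ k = σ a ∧ l = σ b))
        = ∑ l : Fin n, ind (l = σ b ∧ (a < b ∧ b < k ∧ k < l ∧ k = σ a)) from
      sum_congr rfl fun l _ => ind_congr (by tauto)]
    rw [sum_eq_left]
    exact ind_congr (by tauto)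
  rw [sum_congr rfl fun k _ => step1 k, sum_eq_left]

lemma unestZ : (unestCt σ : ℤ) =
    ∑ a : Fin n, ∑ b : Fin n, ind (a < b ∧ b < σ b ∧ σ b < σ a) := by
  rw [unestCt, cardZ, Fintype.sum_prod_type]
  refine sum_congr rfl fun a _ => ?_
  rw [Fintype.sum_prod_type]
  refine sum_congr rfl fun b _ => ?_
  rw [Fintype.sum_prod_type]
  have step1 : ∀ k : Fin n,
      (∑ l : Fin n, ind (a < b ∧ b < k ∧ k < l ∧ l = σ a ∧ k = σ b))
        = ind (k = σ b ∧ (a < b ∧ b < k ∧ k < σ a)) := by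
    intro k
    rw [show (∑ l : Fin n, ind (a < b ∧ b < k ∧ k < l ∧ l = σ a ∧ k = σ b))
        = ∑ l : Fin n, ind (l = σ a ∧ (a < b ∧ b < k ∧ k < l ∧ k = σ b)) from
      sum_congr rfl fun l _ => ind_congr (by tauto)]
    rw [sum_eq_left]
    exact ind_congr (by tauto)
  rw [sum_congr rfl fun k _ => step1 k, sum_eq_left]

lemma lcrossZ : (lcrossCt σ : ℤ) =
    ∑ a : Fin n, ∑ b : Fin n, ind (σ a < σ b ∧ σ b < a ∧ a < b) := by
  rw [lcrossCt, cardZ, Fintype.sum_prod_type]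
  rw [show (∑ a : Fin n, ∑ p : Fin n × Fin n × Fin n,
        ind (a < p.1 ∧ p.1 < p.2.1 ∧ p.2.1 < p.2.2 ∧ a = σ p.2.1 ∧ p.1 = σ p.2.2))
      = ∑ a : Fin n, ∑ b : Fin n, ∑ k : Fin n, ∑ l : Fin n,
          ind (a < b ∧ b < k ∧ k < l ∧ a = σ k ∧ b = σ l) from
    sum_congr rfl fun a _ => by
      rw [Fintype.sum_prod_type]
      exact sum_congr rfl fun b _ => by rw [Fintype.sum_prod_type]]
  rw [sum4_comm]
  refine sum_congr rfl fun k _ => ?_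
  refine sum_congr rfl fun l _ => ?_
  have step1 : ∀ a : Fin n,
      (∑ b : Fin n, ind (a < b ∧ b < k ∧ k < l ∧ a = σ k ∧ b = σ l))
        = ind (a = σ k ∧ (a < σ l ∧ σ l < k ∧ k < l)) := by
    intro a
    rw [show (∑ b : Fin n, ind (a < b ∧ b < k ∧ k < l ∧ a = σ k ∧ b = σ l))
        = ∑ b : Fin n, ind (b = σ l ∧ (a < b ∧ b < k ∧ k < l ∧ a = σ k)) from
      sum_congr rfl fun b _ => ind_congr (by tauto)]
    rw [sum_eq_left]
    exact ind_congr (by tauto)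
  rw [sum_congr rfl fun a _ => step1 a,
    show (∑ a : Fin n, ind (a = σ k ∧ (a < σ l ∧ σ l < k ∧ k < l)))
      = ind (σ k < σ l ∧ σ l < k ∧ k < l) from (sum_eq_left _ _)]

lemma lnestZ : (lnestCt σ : ℤ) =
    ∑ a : Fin n, ∑ b : Fin n, ind (σ b < σ a ∧ σ a < a ∧ a < b) := by
  rw [lnestCt, cardZ, Fintype.sum_prod_type]
  rw [show (∑ a : Fin n, ∑ p : Fin n × Fin n × Fin n,
        ind (a < p.1 ∧ p.1 < p.2.1 ∧ p.2.1 < p.2.2 ∧ a = σ p.2.2 ∧ p.1 = σ p.2.1))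
      = ∑ a : Fin n, ∑ b : Fin n, ∑ k : Fin n, ∑ l : Fin n,
          ind (a < b ∧ b < k ∧ k < l ∧ a = σ l ∧ b = σ k) from
    sum_congr rfl fun a _ => by
      rw [Fintype.sum_prod_type]
      exact sum_congr rfl fun b _ => by rw [Fintype.sum_prod_type]]
  rw [sum4_comm]
  refine sum_congr rfl fun k _ => ?_
  refine sum_congr rfl fun l _ => ?_
  have step1 : ∀ a : Fin n,
      (∑ b : Fin n, ind (a < b ∧ b < k ∧ k < l ∧ a = σ l ∧ b = σ k))
        = ind (a = σ l ∧ (a < σ k ∧ σ k < k ∧ k < l)) := by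
    intro a
    rw [show (∑ b : Fin n, ind (a < b ∧ b < k ∧ k < l ∧ a = σ l ∧ b = σ k))
        = ∑ b : Fin n, ind (b = σ k ∧ (a < b ∧ b < k ∧ k < l ∧ a = σ l)) from
      sum_congr rfl fun b _ => ind_congr (by tauto)]
    rw [sum_eq_left]
    exact ind_congr (by tauto)
  rw [sum_congr rfl fun a _ => step1 a,
    show (∑ a : Fin n, ind (a = σ l ∧ (a < σ k ∧ σ k < k ∧ k < l)))
      = ind (σ l < σ k ∧ σ k < k ∧ k < l) from (sum_eq_left _ _)]

lemma psnestPairZ : (psnestCt σ : ℤ) =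
    ∑ a : Fin n, ∑ b : Fin n, ind (a < b ∧ b < σ a ∧ σ b = b) := by
  rw [psnestCt, cardZ, Fintype.sum_prod_type]
  refine sum_congr rfl fun a _ => ?_
  rw [Fintype.sum_prod_type]
  refine sum_congr rfl fun b _ => ?_
  rw [show (∑ k : Fin n, ind (a < b ∧ b < k ∧ σ b = b ∧ σ a = k))
      = ∑ k : Fin n, ind (k = σ a ∧ (a < b ∧ b < k ∧ σ b = b)) from
    sum_congr rfl fun k _ => ind_congr ⟨fun ⟨h1,h2,h3,h4⟩ => ⟨h4.symm,h1,h2,h3⟩, fun ⟨h4,h1,h2,h3⟩ => ⟨h1,h2,h3,h4.symm⟩⟩]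
  rw [sum_eq_left]

noncomputable def Xs : ℤ := ∑ a : Fin n, ∑ b : Fin n,
  ind (a < b ∧ ((b ≤ σ a ∧ b ≤ σ b) ∨ (σ a < a ∧ σ b ≤ a)))

noncomputable def Ds : ℤ := ∑ a : Fin n, ∑ b : Fin n,
  ind (a < b ∧ a ≤ σ a ∧ σ b < σ a ∧ σ b < b ∧ σ b ≠ a)

set_option maxHeartbeats 2000000 in
lemma M1 : (invCt σ : ℤ) + Xs σ
    = ((cvalCt σ : ℤ) + cdriseCt σ + cdfallCt σ + ucrossCt σ + lcrossCt σ)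
      + 2 * ((unestCt σ : ℤ) + lnestCt σ + psnestCt σ) + Ds σ := by
  rw [invZ, cvalPairZ, cdrisePairZ, cdfallPairZ, ucrossZ, lcrossZ, unestZ, lnestZ,
    psnestPairZ, Xs, Ds]
  simp only [Finset.mul_sum, ← Finset.sum_add_distrib]
  refine sum_congr rfl fun a _ => sum_congr rfl fun b _ => ?_
  have hne : (a : ℕ) < (b : ℕ) → ((σ a : Fin n) : ℕ) ≠ ((σ b : Fin n) : ℕ) :=
    fun h hh => (Nat.ne_of_lt h) (congrArg Fin.val (σ.injective (Fin.val_injective hh)))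
  simp only [ind, Fin.lt_def, Fin.le_def, Fin.ext_iff, ne_eq]
  split_ifs <;> omega

noncomputable def P2s : ℤ := ∑ a : Fin n, ∑ b : Fin n, ind (a < b ∧ b ≤ σ a)

noncomputable def P1s : ℤ := ∑ a : Fin n, ∑ b : Fin n,
  ind (a < b ∧ a ≤ σ a ∧ σ b < σ a ∧ σ b < b)

noncomputable def Bs : ℤ := ∑ c : Fin n, ∑ g : Fin n, ind (σ c < g ∧ g ≤ c ∧ σ g < g)

noncomputable def Cs : ℤ := ∑ c : Fin n, ∑ a : Fin n, ind (σ c < c ∧ a ≤ σ c ∧ σ c < σ a)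

noncomputable def Qs : ℤ := ∑ c : Fin n, ind (σ c < c) * (((c:ℕ) : ℤ) - (((σ c : Fin n):ℕ) : ℤ))

noncomputable def hZ (t : ℕ) : ℤ := ∑ b : Fin n, ind ((b:ℕ) < t ∧ t ≤ ((σ b : Fin n):ℕ))

noncomputable def dZ (x : Fin n) : ℤ := ind (x < σ x) - ind (σ⁻¹ x < x)

lemma fix_iff (x : Fin n) : ((σ⁻¹ x : Fin n) : ℕ) = (x : ℕ) ↔ ((σ x : Fin n) : ℕ) = (x : ℕ) := by
  rw [← Fin.ext_iff, ← Fin.ext_iff]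
  constructor
  · intro h; nth_rewrite 1 [← h]; rw [Equiv.Perm.apply_inv_self]
  · intro h; nth_rewrite 1 [← h]; rw [Equiv.Perm.inv_apply_self]

lemma compl (t : ℕ) :
    (∑ b : Fin n, ind (t ≤ (b:ℕ) ∧ ((σ b : Fin n):ℕ) < t))
      = ∑ b : Fin n, ind ((b:ℕ) < t ∧ t ≤ ((σ b : Fin n):ℕ)) := by
  have base : (∑ b : Fin n, ind (((σ b : Fin n):ℕ) < t)) = ∑ b : Fin n, ind ((b:ℕ) < t) :=
    Equiv.sum_comp σ (fun b => ind ((b:ℕ) < t))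
  have e1 : (∑ b : Fin n, ind (((σ b : Fin n):ℕ) < t))
      = (∑ b : Fin n, ind ((b:ℕ) < t ∧ ((σ b : Fin n):ℕ) < t))
        + ∑ b : Fin n, ind (t ≤ (b:ℕ) ∧ ((σ b : Fin n):ℕ) < t) := by
    rw [← Finset.sum_add_distrib]
    refine sum_congr rfl fun b _ => ?_
    simp only [ind]; split_ifs <;> omega
  have e2 : (∑ b : Fin n, ind ((b:ℕ) < t))
      = (∑ b : Fin n, ind ((b:ℕ) < t ∧ ((σ b : Fin n):ℕ) < t))
        + ∑ b : Fin n, ind ((b:ℕ) < t ∧ t ≤ ((σ b : Fin n):ℕ)) := by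
    rw [← Finset.sum_add_distrib]
    refine sum_congr rfl fun b _ => ?_
    simp only [ind]; split_ifs <;> omega
  linarith

lemma ioo_count (u v : Fin n) :
    (∑ g : Fin n, ind (u < g ∧ g < v)) = ind (u < v) * (((v:ℕ):ℤ) - ((u:ℕ):ℤ) - 1) := by
  have : (∑ g : Fin n, ind (u < g ∧ g < v)) = ((univ.filter fun g => u < g ∧ g < v).card : ℤ) :=
    (cardZ _).symm
  rw [this, show (univ.filter fun g : Fin n => u < g ∧ g < v) = Finset.Ioo u v from by
    ext g; simp [Finset.mem_Ioo]]
  rw [Fin.card_Ioo]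
  simp only [ind]
  split_ifs with h
  · have : (u:ℕ) < (v:ℕ) := h
    push_cast; omega
  · have : ¬ (u:ℕ) < (v:ℕ) := h
    have hz : (v:ℕ) - (u:ℕ) - 1 = 0 := by omega
    rw [hz]; simp

lemma ioc_count (u v : Fin n) :
    (∑ g : Fin n, ind (u < g ∧ g ≤ v)) = ind (u < v) * (((v:ℕ):ℤ) - ((u:ℕ):ℤ)) := by
  have : (∑ g : Fin n, ind (u < g ∧ g ≤ v)) = ((univ.filter fun g => u < g ∧ g ≤ v).card : ℤ) :=
    (cardZ _).symm
  rw [this, show (univ.filter fun g : Fin n => u < g ∧ g ≤ v) = Finset.Ioc u v from by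
    ext g; simp [Finset.mem_Ioc]]
  rw [Fin.card_Ioc]
  simp only [ind]
  split_ifs with h
  · have : (u:ℕ) < (v:ℕ) := h
    push_cast; omega
  · have : ¬ (u:ℕ) < (v:ℕ) := h
    have hz : (v:ℕ) - (u:ℕ) = 0 := by omega
    rw [hz]; simp

noncomputable def XU : ℤ := ∑ a : Fin n, ∑ b : Fin n, ind (a < b ∧ b ≤ σ a ∧ b ≤ σ b)
noncomputable def XL : ℤ := ∑ a : Fin n, ∑ b : Fin n, ind (a < b ∧ σ a < a ∧ σ b ≤ a)
noncomputable def Rs : ℤ := ∑ a : Fin n, ∑ b : Fin n, ind (a < b ∧ b ≤ σ a ∧ σ b < b)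

lemma Xsplit : Xs σ = XU σ + XL σ := by
  rw [Xs, XU, XL, ← Finset.sum_add_distrib]
  refine sum_congr rfl fun a _ => ?_
  rw [← Finset.sum_add_distrib]
  refine sum_congr rfl fun b _ => ?_
  simp only [ind, Fin.lt_def, Fin.le_def]; split_ifs <;> omega

lemma P2split : P2s σ = XU σ + Rs σ := by
  rw [P2s, XU, Rs, ← Finset.sum_add_distrib]
  refine sum_congr rfl fun a _ => ?_
  rw [← Finset.sum_add_distrib]
  refine sum_congr rfl fun b _ => ?_
  simp only [ind, Fin.lt_def, Fin.le_def]; split_ifs <;> omega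

lemma Rs_eq : Rs σ = XL σ + (cpeakCt σ : ℤ) := by
  have swapR : Rs σ = ∑ b : Fin n, ∑ a : Fin n, ind (σ b < b ∧ a < b ∧ b ≤ σ a) := by
    rw [Rs, Finset.sum_comm]
    exact sum_congr rfl fun b _ => sum_congr rfl fun a _ => ind_congr (by tauto)
  have swapXL : XL σ = ∑ b : Fin n, ∑ a : Fin n, ind (σ b < b ∧ b < a ∧ σ a ≤ b) := by
    rw [XL]
    exact sum_congr rfl fun b _ => sum_congr rfl fun a _ => ind_congr (by tauto)
  have hR2 : ∀ b : Fin n, (∑ a : Fin n, ind (σ b < b ∧ a < b ∧ b ≤ σ a))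
      = ∑ a : Fin n, ind (σ b < b ∧ b ≤ a ∧ σ a < b) := by
    intro b
    have h1 : (∑ a : Fin n, ind (σ b < b ∧ a < b ∧ b ≤ σ a))
        = ind (σ b < b) * ∑ a : Fin n, ind ((a:ℕ) < (b:ℕ) ∧ (b:ℕ) ≤ ((σ a : Fin n):ℕ)) := by
      rw [Finset.mul_sum]
      refine sum_congr rfl fun a _ => ?_
      rw [← ind_and]
      exact ind_congr (by simp only [Fin.lt_def, Fin.le_def])
    have h2 : (∑ a : Fin n, ind (σ b < b ∧ b ≤ a ∧ σ a < b))
        = ind (σ b < b) * ∑ a : Fin n, ind ((b:ℕ) ≤ (a:ℕ) ∧ ((σ a : Fin n):ℕ) < (b:ℕ)) := by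
      rw [Finset.mul_sum]
      refine sum_congr rfl fun a _ => ?_
      rw [← ind_and]
      exact ind_congr (by simp only [Fin.lt_def, Fin.le_def])
    rw [h1, h2, compl]
  have hdiag : ∀ b : Fin n, (∑ a : Fin n, ind (σ b < b ∧ b ≤ a ∧ σ a < b))
      = (∑ a : Fin n, ind (σ b < b ∧ b < a ∧ σ a < b)) + ind (σ b < b) := by
    intro b
    have e : ∀ a : Fin n, ind (σ b < b ∧ b ≤ a ∧ σ a < b)
        = ind (σ b < b ∧ b < a ∧ σ a < b) + ind (a = b ∧ (σ b < b ∧ σ a < b)) := by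
      intro a
      simp only [ind, Fin.lt_def, Fin.le_def, Fin.ext_iff]; split_ifs <;> omega
    rw [sum_congr rfl fun a _ => e a, Finset.sum_add_distrib, sum_eq_left]
    congr 1
    exact ind_congr (by tauto)
  have hXLsplit : ∀ b : Fin n, (∑ a : Fin n, ind (σ b < b ∧ b < a ∧ σ a ≤ b))
      = (∑ a : Fin n, ind (σ b < b ∧ b < a ∧ σ a < b)) + ind (σ b < b ∧ b < σ⁻¹ b) := by
    intro b
    have e : ∀ a : Fin n, ind (σ b < b ∧ b < a ∧ σ a ≤ b)
        = ind (σ b < b ∧ b < a ∧ σ a < b) + ind (σ a = b ∧ (σ b < b ∧ b < a)) := by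
      intro a
      simp only [ind, Fin.lt_def, Fin.le_def, Fin.ext_iff]; split_ifs <;> omega
    rw [sum_congr rfl fun a _ => e a, Finset.sum_add_distrib, sum_sigma_eq]
  have hcp : ∀ b : Fin n, ind (σ⁻¹ b < b ∧ σ b < b) + ind (σ b < b ∧ b < σ⁻¹ b)
      = ind (σ b < b) := by
    intro b
    have hf := fix_iff σ b
    simp only [ind, Fin.lt_def]; split_ifs <;> omega
  rw [swapR, swapXL, cpeakZ, ← Finset.sum_add_distrib]
  refine sum_congr rfl fun b _ => ?_
  rw [hR2 b, hdiag b, hXLsplit b]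
  have := hcp b
  linarith

lemma M2 : Xs σ + (cpeakCt σ : ℤ) = P2s σ := by
  have h1 := Xsplit σ
  have h2 := P2split σ
  have h3 := Rs_eq σ
  linarith

lemma M3 : Ds σ + (cvalCt σ : ℤ) = P1s σ := by
  rw [Ds, cvalZ, P1s, ← Finset.sum_add_distrib]
  refine sum_congr rfl fun a _ => ?_
  have e : ∀ b : Fin n, ind (a < b ∧ a ≤ σ a ∧ σ b < σ a ∧ σ b < b)
      = ind (a < b ∧ a ≤ σ a ∧ σ b < σ a ∧ σ b < b ∧ σ b ≠ a)
        + ind (σ b = a ∧ (a < b ∧ a ≤ σ a ∧ σ b < σ a ∧ σ b < b)) := by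
    intro b
    simp only [ind, Fin.lt_def, Fin.le_def, Fin.ext_iff, ne_eq]; split_ifs <;> omega
  have key : (∑ b : Fin n, ind (a < b ∧ a ≤ σ a ∧ σ b < σ a ∧ σ b < b))
      = (∑ b : Fin n, ind (a < b ∧ a ≤ σ a ∧ σ b < σ a ∧ σ b < b ∧ σ b ≠ a))
        + ind (a < σ⁻¹ a ∧ a ≤ σ a ∧ σ (σ⁻¹ a) < σ a ∧ σ (σ⁻¹ a) < σ⁻¹ a) := by
    rw [sum_congr rfl fun b _ => e b, Finset.sum_add_distrib, sum_sigma_eq]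
  rw [key]
  simp only [Equiv.Perm.apply_inv_self]
  congr 1
  exact ind_congr (by simp only [Fin.lt_def, Fin.le_def]; omega)

lemma M4 : P1s σ + Bs σ = Qs σ + Cs σ := by
  have swapP1 : P1s σ = ∑ c : Fin n, ∑ a : Fin n,
      ind (a < c ∧ a ≤ σ a ∧ σ c < σ a ∧ σ c < c) := by
    rw [P1s, Finset.sum_comm]
  rw [swapP1, Bs, Qs, Cs, ← Finset.sum_add_distrib, ← Finset.sum_add_distrib]
  refine sum_congr rfl fun c _ => ?_
  have s1 : (∑ a : Fin n, ind (a < c ∧ a ≤ σ a ∧ σ c < σ a ∧ σ c < c))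
      = (∑ a : Fin n, ind (σ c < c ∧ a ≤ σ c ∧ σ c < σ a))
        + ∑ a : Fin n, ind (σ c < c ∧ σ c < a ∧ a < c ∧ a ≤ σ a) := by
    rw [← Finset.sum_add_distrib]
    refine sum_congr rfl fun a _ => ?_
    simp only [ind, Fin.lt_def, Fin.le_def]; split_ifs <;> omega
  have s2 : (∑ g : Fin n, ind (σ c < g ∧ g ≤ c ∧ σ g < g))
      = (∑ g : Fin n, ind (σ c < g ∧ g < c ∧ σ g < g)) + ind (σ c < c) := by
    have e : ∀ g : Fin n, ind (σ c < g ∧ g ≤ c ∧ σ g < g)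
        = ind (σ c < g ∧ g < c ∧ σ g < g) + ind (g = c ∧ (σ c < g ∧ σ g < g)) := by
      intro g; simp only [ind, Fin.lt_def, Fin.le_def, Fin.ext_iff]; split_ifs <;> omega
    rw [sum_congr rfl fun g _ => e g, Finset.sum_add_distrib, sum_eq_left]
    congr 1
    exact ind_congr (by tauto)
  have s3 : (∑ a : Fin n, ind (σ c < c ∧ σ c < a ∧ a < c ∧ a ≤ σ a))
        + (∑ g : Fin n, ind (σ c < g ∧ g < c ∧ σ g < g))
      = ∑ g : Fin n, ind (σ c < g ∧ g < c) := by
    rw [← Finset.sum_add_distrib]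
    refine sum_congr rfl fun g _ => ?_
    simp only [ind, Fin.lt_def, Fin.le_def]; split_ifs <;> omega
  have s4 := ioo_count (n := n) (σ c) c
  have s5 : ind (σ c < c) * ((((c:ℕ)):ℤ) - (((σ c : Fin n):ℕ):ℤ) - 1) + ind (σ c < c)
      = ind (σ c < c) * ((((c:ℕ)):ℤ) - (((σ c : Fin n):ℕ):ℤ)) := by
    simp only [ind]; split_ifs <;> ring
  linarith [s1, s2, s3, s4, s5]

lemma M5 : P2s σ = Qs σ := by
  rw [P2s, Qs]
  rw [sum_congr rfl fun a _ => ioc_count (n := n) a (σ a)]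
  have base : (∑ a : Fin n, (((σ a : Fin n):ℕ):ℤ)) = ∑ a : Fin n, ((a:ℕ):ℤ) :=
    Equiv.sum_comp σ (fun a => ((a:ℕ):ℤ))
  have e : ∀ a : Fin n, ind (a < σ a) * ((((σ a : Fin n):ℕ):ℤ) - ((a:ℕ):ℤ))
      = ind (σ a < a) * (((a:ℕ):ℤ) - (((σ a : Fin n):ℕ):ℤ))
        + ((((σ a : Fin n):ℕ):ℤ) - ((a:ℕ):ℤ)) := by
    intro a
    have ht : (a:ℕ) < ((σ a : Fin n):ℕ) ∨ ((σ a : Fin n):ℕ) < (a:ℕ)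
        ∨ ((σ a : Fin n):ℕ) = (a:ℕ) := by omega
    simp only [ind, Fin.lt_def]; split_ifs <;> rcases ht with h|h|h <;> push_cast <;> omega
  rw [sum_congr rfl fun a _ => e a, Finset.sum_add_distrib]
  have z : (∑ a : Fin n, ((((σ a : Fin n):ℕ):ℤ) - ((a:ℕ):ℤ))) = 0 := by
    rw [Finset.sum_sub_distrib, base]; ring
  rw [z, add_zero]

lemma M6a : Bs σ = ∑ g : Fin n, ind (σ g < g) * hZ σ (g:ℕ) := by
  rw [Bs, Finset.sum_comm]
  refine sum_congr rfl fun g _ => ?_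
  have h1 : (∑ c : Fin n, ind (σ c < g ∧ g ≤ c ∧ σ g < g))
      = ind (σ g < g) * ∑ c : Fin n, ind ((g:ℕ) ≤ (c:ℕ) ∧ ((σ c : Fin n):ℕ) < (g:ℕ)) := by
    rw [Finset.mul_sum]
    refine sum_congr rfl fun c _ => ?_
    rw [← ind_and]
    exact ind_congr (by simp only [Fin.lt_def, Fin.le_def]; tauto)
  rw [h1, compl, hZ]

lemma M6b : Cs σ = ∑ c : Fin n, ind (σ c < c) * hZ σ (((σ c : Fin n):ℕ) + 1) := by
  rw [Cs]
  refine sum_congr rfl fun c _ => ?_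
  rw [hZ, Finset.mul_sum]
  refine sum_congr rfl fun a _ => ?_
  rw [← ind_and]
  exact ind_congr (by simp only [Fin.lt_def, Fin.le_def]; omega)

lemma M7 (t : ℕ) : hZ σ t = ∑ x : Fin n, ind ((x:ℕ) < t) * dZ σ x := by
  have e : ∀ x : Fin n, ind ((x:ℕ) < t) * dZ σ x
      = ind ((x:ℕ) < t ∧ (x:ℕ) < ((σ x : Fin n):ℕ))
        - ind ((x:ℕ) < t ∧ ((σ⁻¹ x : Fin n):ℕ) < (x:ℕ)) := by
    intro x
    rw [dZ, mul_sub, ← ind_and, ← ind_and]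
    congr 1 <;> exact ind_congr (by simp [Fin.lt_def])
  rw [sum_congr rfl fun x _ => e x, Finset.sum_sub_distrib]
  have reidx : (∑ x : Fin n, ind ((x:ℕ) < t ∧ ((σ⁻¹ x : Fin n):ℕ) < (x:ℕ)))
      = ∑ a : Fin n, ind ((((σ a : Fin n)):ℕ) < t ∧ (a:ℕ) < ((σ a : Fin n):ℕ)) := by
    rw [← Equiv.sum_comp σ (fun x => ind ((x:ℕ) < t ∧ ((σ⁻¹ x : Fin n):ℕ) < (x:ℕ)))]
    simp only [Equiv.Perm.inv_apply_self]
  rw [reidx, hZ, ← Finset.sum_sub_distrib]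
  refine sum_congr rfl fun b _ => ?_
  simp only [ind]; split_ifs <;> omega

lemma sum_dZ_zero : (∑ x : Fin n, dZ σ x) = 0 := by
  simp only [dZ]
  rw [Finset.sum_sub_distrib]
  have reidx : (∑ x : Fin n, ind (σ⁻¹ x < x)) = ∑ a : Fin n, ind (a < σ a) := by
    rw [← Equiv.sum_comp σ (fun x => ind (σ⁻¹ x < x))]
    simp only [Equiv.Perm.inv_apply_self]
  rw [reidx]; ring

lemma cval_eq_cpeak : (cvalCt σ : ℤ) = cpeakCt σ := by
  have e : ∀ x : Fin n, dZ σ x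
      = ind (x < σ⁻¹ x ∧ x < σ x) - ind (σ⁻¹ x < x ∧ σ x < x) := by
    intro x
    have hf := fix_iff σ x
    simp only [dZ, ind, Fin.lt_def]; split_ifs <;> omega
  have h : (∑ x : Fin n, dZ σ x) = (cvalCt σ : ℤ) - cpeakCt σ := by
    rw [sum_congr rfl fun x _ => e x, Finset.sum_sub_distrib, cvalZ, cpeakZ]
  have h0 := sum_dZ_zero σ
  linarith

lemma sum_dZ_sq : (∑ x : Fin n, dZ σ x * dZ σ x) = (cvalCt σ : ℤ) + cpeakCt σ := by
  rw [cvalZ, cpeakZ, ← Finset.sum_add_distrib]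
  refine sum_congr rfl fun x _ => ?_
  have hf := fix_iff σ x
  simp only [dZ, ind, Fin.lt_def]
  split_ifs <;> ring_nf <;> omega

lemma hT : (∑ x : Fin n, hZ σ (x:ℕ) * dZ σ x) = -(cvalCt σ : ℤ) := by
  have expand : (∑ x : Fin n, hZ σ (x:ℕ) * dZ σ x)
      = ∑ x : Fin n, ∑ y : Fin n, ind ((y:ℕ) < (x:ℕ)) * dZ σ y * dZ σ x := by
    refine sum_congr rfl fun x _ => ?_
    rw [M7, Finset.sum_mul]
  have e : ∀ x y : Fin n, dZ σ x * dZ σ y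
      = ind ((y:ℕ) < (x:ℕ)) * dZ σ y * dZ σ x
        + ind ((x:ℕ) < (y:ℕ)) * dZ σ y * dZ σ x
        + ind (y = x) * (dZ σ x * dZ σ y) := by
    intro x y
    have h1 : (1:ℤ) = ind ((y:ℕ) < (x:ℕ)) + ind ((x:ℕ) < (y:ℕ)) + ind (y = x) := by
      simp only [ind, Fin.ext_iff]; split_ifs <;> omega
    calc dZ σ x * dZ σ y
        = (ind ((y:ℕ) < (x:ℕ)) + ind ((x:ℕ) < (y:ℕ)) + ind (y = x)) * (dZ σ x * dZ σ y) := by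
          rw [← h1]; ring
      _ = _ := by ring
  have sq : (∑ x : Fin n, dZ σ x) * (∑ y : Fin n, dZ σ y)
      = (∑ x : Fin n, ∑ y : Fin n, ind ((y:ℕ) < (x:ℕ)) * dZ σ y * dZ σ x)
        + (∑ x : Fin n, ∑ y : Fin n, ind ((x:ℕ) < (y:ℕ)) * dZ σ y * dZ σ x)
        + (∑ x : Fin n, dZ σ x * dZ σ x) := by
    rw [Finset.sum_mul_sum]
    rw [sum_congr rfl fun x _ => sum_congr rfl fun y _ => e x y]
    simp only [Finset.sum_add_distrib]
    congr 1
    refine sum_congr rfl fun x _ => ?_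
    exact sum_ind_eq x (fun y => dZ σ x * dZ σ y)
  have symm : (∑ x : Fin n, ∑ y : Fin n, ind ((x:ℕ) < (y:ℕ)) * dZ σ y * dZ σ x)
      = ∑ x : Fin n, ∑ y : Fin n, ind ((y:ℕ) < (x:ℕ)) * dZ σ y * dZ σ x := by
    rw [Finset.sum_comm]
    exact sum_congr rfl fun x _ => sum_congr rfl fun y _ => by ring
  have h0 := sum_dZ_zero σ
  have hsq := sum_dZ_sq σ
  have hcp := cval_eq_cpeak σ
  rw [expand]
  rw [h0, zero_mul] at sq
  rw [symm] at sq
  linarith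

lemma M8 : Cs σ - Bs σ = (cvalCt σ : ℤ) - cpeakCt σ := by
  have hCs : Cs σ = ∑ c : Fin n, ∑ x : Fin n,
      ind (σ c < c ∧ (x:ℕ) ≤ ((σ c : Fin n):ℕ)) * dZ σ x := by
    rw [M6b]
    refine sum_congr rfl fun c _ => ?_
    rw [M7, Finset.mul_sum]
    refine sum_congr rfl fun x _ => ?_
    rw [← mul_assoc, ← ind_and]
    congr 1
    exact ind_congr (by simp only [Fin.lt_def]; omega)
  have hBs : Bs σ = ∑ c : Fin n, ∑ x : Fin n,
      ind (σ c < c ∧ (x:ℕ) < (c:ℕ)) * dZ σ x := by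
    rw [M6a]
    refine sum_congr rfl fun c _ => ?_
    rw [M7, Finset.mul_sum]
    refine sum_congr rfl fun x _ => ?_
    rw [← mul_assoc, ← ind_and]
  have inner : ∀ c : Fin n,
      ((∑ x : Fin n, ind (σ c < c ∧ (x:ℕ) ≤ ((σ c : Fin n):ℕ)) * dZ σ x)
        - ∑ x : Fin n, ind (σ c < c ∧ (x:ℕ) < (c:ℕ)) * dZ σ x)
      = ∑ x : Fin n, (-(ind (((σ c : Fin n):ℕ) < (x:ℕ) ∧ (x:ℕ) < (c:ℕ)))) * dZ σ x := by
    intro c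
    rw [← Finset.sum_sub_distrib]
    refine sum_congr rfl fun x _ => ?_
    rw [← sub_mul]
    congr 1
    simp only [ind, Fin.lt_def]; split_ifs <;> omega
  have hinner : ∀ x : Fin n,
      (∑ c : Fin n, ind (((σ c : Fin n):ℕ) < (x:ℕ) ∧ (x:ℕ) < (c:ℕ)))
        = hZ σ (x:ℕ) - ind (σ x < x) := by
    intro x
    have e : ∀ c : Fin n, ind ((x:ℕ) ≤ (c:ℕ) ∧ ((σ c : Fin n):ℕ) < (x:ℕ))
        = ind (((σ c : Fin n):ℕ) < (x:ℕ) ∧ (x:ℕ) < (c:ℕ))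
          + ind (c = x ∧ ((σ c : Fin n):ℕ) < (x:ℕ)) := by
      intro c; simp only [ind, Fin.ext_iff]; split_ifs <;> omega
    have hcm := compl σ (x:ℕ)
    rw [sum_congr rfl fun c _ => e c, Finset.sum_add_distrib, sum_eq_left] at hcm
    have hcv : ind (((σ x : Fin n):ℕ) < (x:ℕ)) = ind (σ x < x) :=
      ind_congr Fin.lt_def.symm
    rw [hcv] at hcm
    rw [hZ]
    linarith
  have step1 : Cs σ - Bs σ
      = ∑ x : Fin n, (-(hZ σ (x:ℕ) - ind (σ x < x))) * dZ σ x := by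
    rw [hCs, hBs, ← Finset.sum_sub_distrib, sum_congr rfl fun c _ => inner c,
      Finset.sum_comm]
    refine sum_congr rfl fun x _ => ?_
    rw [show (-(hZ σ (x:ℕ) - ind (σ x < x)))
        = -(∑ c : Fin n, ind (((σ c : Fin n):ℕ) < (x:ℕ) ∧ (x:ℕ) < (c:ℕ))) from by
      rw [hinner x]]
    rw [neg_mul, Finset.sum_mul, ← Finset.sum_neg_distrib]
    exact sum_congr rfl fun c _ => by ring
  have step2 : (∑ x : Fin n, (-(hZ σ (x:ℕ) - ind (σ x < x))) * dZ σ x)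
      = (∑ x : Fin n, ind (σ x < x) * dZ σ x) - ∑ x : Fin n, hZ σ (x:ℕ) * dZ σ x := by
    rw [← Finset.sum_sub_distrib]
    exact sum_congr rfl fun x _ => by ring
  have hlast : (∑ x : Fin n, ind (σ x < x) * dZ σ x) = -(cpeakCt σ : ℤ) := by
    rw [cpeakZ, ← Finset.sum_neg_distrib]
    refine sum_congr rfl fun x _ => ?_
    simp only [dZ, ind, Fin.lt_def]
    split_ifs <;> ring_nf <;> omega
  have ht := hT σ
  rw [step1, step2, hlast, ht]
  ring

end SgnAux

theorem sign_eq_neg_one_pow_stats {n : ℕ} (σ : Equiv.Perm (Fin n)) :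
    Equiv.Perm.sign σ =
      (-1 : ℤˣ) ^ (cvalCt σ + cdriseCt σ + cdfallCt σ + ucrossCt σ + lcrossCt σ) := by
  have m1 := SgnAux.M1 σ
  have m2 := SgnAux.M2 σ
  have m3 := SgnAux.M3 σ
  have m4 := SgnAux.M4 σ
  have m5 := SgnAux.M5 σ
  have m8 := SgnAux.M8 σ
  have key : (invCt σ : ℤ)
      = ((cvalCt σ : ℤ) + cdriseCt σ + cdfallCt σ + ucrossCt σ + lcrossCt σ)
        + 2 * ((unestCt σ : ℤ) + lnestCt σ + psnestCt σ) := by linarith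
  have keyN : invCt σ
      = (cvalCt σ + cdriseCt σ + cdfallCt σ + ucrossCt σ + lcrossCt σ)
        + 2 * (unestCt σ + lnestCt σ + psnestCt σ) := by exact_mod_cast key
  rw [SgnAux.sign_eq_pow_invCt, keyN, pow_add, pow_mul, neg_one_sq, one_pow, mul_one]
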